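/- For every function δ₀ : ℝ → ℝ mapping (0,2] into (0,1] there exists a constant r₁ with 0 ≤ r₁ < 1 such that: for every real Banach space E for which δ₀ is a modulus of uniform convexity, every triple U, V, W of invertible linear isometries of E satisfying the Heisenberg relations, every n ∈ ℕ with n ≥ 2, and every ξ ∈ E, one has ‖ X₀ ∘ Y^n ∘ (I − Z₀) ξ ‖ ≤ max{ r₁·‖(I − Z₀)ξ‖, (1/2)^{n−2}·‖ξ‖ }, where X₀ = (I + U)/2, Y^n = 2^{−n} ∑_{b=0}^{2^n−1} V^b, and Z₀ = (I + W)/2. -/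

import Mathlib

/-- `δ : ℝ → ℝ` is a *modulus of uniform convexity* for `E`: it maps `(0,2]` into `(0,1]` and
for every `ε ∈ (0,2]` and all unit vectors `ξ, η` with `‖ξ - η‖ ≥ ε` one has
`‖(ξ + η)/2‖ ≤ 1 - δ ε`. -/
def IsUCModulus (E : Type*) [NormedAddCommGroup E] [NormedSpace ℝ E] (δ : ℝ → ℝ) : Prop :=
  (∀ ε : ℝ, 0 < ε → ε ≤ 2 → 0 < δ ε ∧ δ ε ≤ 1) ∧
    ∀ ε : ℝ, 0 < ε → ε ≤ 2 → ∀ ξ η : E, ‖ξ‖ = 1 → ‖η‖ = 1 → ε ≤ ‖ξ - η‖ →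
      ‖(2⁻¹ : ℝ) • (ξ + η)‖ ≤ 1 - δ ε

/-- `U, V, W` satisfy the Heisenberg relations `W = U⁻¹V⁻¹UV`, `UW = WU`, `VW = WV`
(the multiplication on `E ≃ₗᵢ[ℝ] E` is composition, `(e₁ * e₂) x = e₁ (e₂ x)`). -/
def HeisenbergRel {E : Type*} [NormedAddCommGroup E] [NormedSpace ℝ E]
    (U V W : E ≃ₗᵢ[ℝ] E) : Prop :=
  W = U⁻¹ * V⁻¹ * U * V ∧ U * W = W * U ∧ V * W = W * V

/-- The bounded operator on `E` underlying an invertible linear isometry. -/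
noncomputable def isomCLM {E : Type*} [NormedAddCommGroup E] [NormedSpace ℝ E]
    (U : E ≃ₗᵢ[ℝ] E) : E →L[ℝ] E :=
  U.toLinearIsometry.toContinuousLinearMap

/-- The averaging operator `2^{-d} ∑_{a=0}^{2^d - 1} U^a`. -/
noncomputable def avgOp {E : Type*} [NormedAddCommGroup E] [NormedSpace ℝ E]
    (U : E ≃ₗᵢ[ℝ] E) (d : ℕ) : E →L[ℝ] E :=
  ((2 : ℝ) ^ d)⁻¹ • ∑ a ∈ Finset.range (2 ^ d), isomCLM (U ^ a)

open Finset

section Aux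
variable {E : Type*} [NormedAddCommGroup E] [NormedSpace ℝ E] {U V W : E ≃ₗᵢ[ℝ] E}

/-- `U V^b = V^b U W^b` from the Heisenberg relations. -/
lemma heis_comm (hH : HeisenbergRel U V W) (b : ℕ) :
    U * V ^ b = V ^ b * (U * W ^ b) := by
  have huv : U * V = V * U * W := by rw [hH.1]; group
  induction b with
  | zero => simp
  | succ b ih =>
    have hc : Commute V W := hH.2.2
    calc U * V ^ (b+1) = (U * V ^ b) * V := by rw [pow_succ, mul_assoc]
    _ = V ^ b * (U * (W ^ b * V)) := by rw [ih]; group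
    _ = V ^ b * (U * (V * W ^ b)) := by rw [(hc.pow_right b).symm.eq]
    _ = V ^ b * ((U * V) * W ^ b) := by group
    _ = V ^ b * (V * U * W * W ^ b) := by rw [huv]
    _ = V ^ (b+1) * (U * W ^ (b+1)) := by rw [pow_succ, pow_succ]; group

lemma expand_apply (U V W : E ≃ₗᵢ[ℝ] E) (n : ℕ) (ξ : E) :
    (((2⁻¹ : ℝ) • (1 + isomCLM U)) * avgOp V n * (1 - (2⁻¹ : ℝ) • (1 + isomCLM W))) ξ
    = ((2 : ℝ) ^ n)⁻¹ • ∑ a ∈ range (2 ^ n),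
        (2⁻¹ : ℝ) • ((V ^ a) ((1 - (2⁻¹ : ℝ) • (1 + isomCLM W)) ξ)
          + U ((V ^ a) ((1 - (2⁻¹ : ℝ) • (1 + isomCLM W)) ξ))) := by
  set ζ := (1 - (2⁻¹ : ℝ) • (1 + isomCLM W)) ξ with hζ
  rw [ContinuousLinearMap.mul_apply, ContinuousLinearMap.mul_apply]
  rw [show avgOp V n ζ = ((2 : ℝ) ^ n)⁻¹ • ∑ a ∈ range (2 ^ n), (V ^ a) ζ by
    simp [avgOp, isomCLM]]
  simp only [ContinuousLinearMap.smul_apply, ContinuousLinearMap.add_apply,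
    ContinuousLinearMap.one_apply, isomCLM, LinearIsometry.coe_toContinuousLinearMap,
    LinearIsometryEquiv.coe_toLinearIsometry, map_smul, map_sum, smul_add, Finset.smul_sum,
    ← Finset.sum_add_distrib]

end Aux


set_option maxHeartbeats 1000000 in
/-- For every `δ₀` mapping `(0,2]` into `(0,1]` there is `0 ≤ r₁ < 1` such that: for every
real Banach space `E` with modulus of uniform convexity `δ₀`, every Heisenberg triple
`U, V, W` of isometries of `E`, every `n ≥ 2` and every `ξ ∈ E`, one has
`‖X₀ Y^n (I - Z₀) ξ‖ ≤ max {r₁ ‖(I - Z₀)ξ‖, (1/2)^{n-2} ‖ξ‖}`, where `X₀ = (I + U)/2`,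
`Y^n = 2^{-n} ∑_{b=0}^{2^n - 1} V^b` and `Z₀ = (I + W)/2`. -/
theorem heisenberg_X0_Yn_Z0_inequality.{u}
    (δ₀ : ℝ → ℝ) (hδ₀ : ∀ ε : ℝ, 0 < ε → ε ≤ 2 → 0 < δ₀ ε ∧ δ₀ ε ≤ 1) :
    ∃ r₁ : ℝ, 0 ≤ r₁ ∧ r₁ < 1 ∧
      ∀ (E : Type u) [NormedAddCommGroup E] [NormedSpace ℝ E] [CompleteSpace E],
        IsUCModulus E δ₀ →
          ∀ U V W : E ≃ₗᵢ[ℝ] E, HeisenbergRel U V W →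
            ∀ n : ℕ, 2 ≤ n → ∀ ξ : E,
              ‖(((2⁻¹ : ℝ) • (1 + isomCLM U)) * avgOp V n *
                  (1 - (2⁻¹ : ℝ) • (1 + isomCLM W))) ξ‖ ≤
                max (r₁ * ‖(1 - (2⁻¹ : ℝ) • (1 + isomCLM W)) ξ‖)
                  ((2⁻¹ : ℝ) ^ (n - 2) * ‖ξ‖) := by
  classical
  obtain ⟨hδpos, hδle⟩ := hδ₀ (1/8) (by norm_num) (by norm_num)
  set δ := δ₀ (1/8) with hδdef
  refine ⟨1 - δ/4, by linarith, by linarith, ?_⟩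
  intro E _ _ _ hUC U V W hH n hn ξ
  obtain ⟨k, rfl⟩ : ∃ k, n = k + 2 := ⟨n - 2, by omega⟩
  set n := k + 2
  set ζ := (1 - (2⁻¹ : ℝ) • (1 + isomCLM W)) ξ with hζ
  set a := ‖ζ‖ with ha
  -- basic rewrite of the LHS
  rw [expand_apply]
  rw [← hζ]
  -- ζ = 2⁻¹ • (ξ - W ξ)
  have hζeq : ζ = (2⁻¹ : ℝ) • (ξ - W ξ) := by
    simp only [hζ, ContinuousLinearMap.sub_apply, ContinuousLinearMap.one_apply,
      ContinuousLinearMap.smul_apply, ContinuousLinearMap.add_apply, isomCLM,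
      LinearIsometry.coe_toContinuousLinearMap, LinearIsometryEquiv.coe_toLinearIsometry]
    module
  -- norm of each summand
  have hsummand : ∀ b : ℕ, ‖(2⁻¹ : ℝ) • ((V ^ b) ζ + U ((V ^ b) ζ))‖
      = ‖(2⁻¹ : ℝ) • (ζ + (U * W ^ b) ζ)‖ := by
    intro b
    have h1 : U ((V ^ b) ζ) = (V ^ b) ((U * W ^ b) ζ) := by
      have := congrArg (fun (g : E ≃ₗᵢ[ℝ] E) => g ζ) (heis_comm hH b)
      simpa using this
    rw [h1, show (2⁻¹ : ℝ) • ((V ^ b) ζ + (V ^ b) ((U * W ^ b) ζ))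
        = (V ^ b) ((2⁻¹ : ℝ) • (ζ + (U * W ^ b) ζ)) by
      simp [map_add, map_smul]]
    exact (V ^ b).norm_map _
  -- trivial bound on each summand
  have htriv : ∀ b : ℕ, ‖(2⁻¹ : ℝ) • (ζ + (U * W ^ b) ζ)‖ ≤ a := by
    intro b
    have h2 : ‖(U * W ^ b) ζ‖ = a := (U * W ^ b).norm_map ζ
    have h3 : ‖ζ + (U * W ^ b) ζ‖ ≤ a + a := by
      calc ‖ζ + (U * W ^ b) ζ‖ ≤ ‖ζ‖ + ‖(U * W ^ b) ζ‖ := norm_add_le _ _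
      _ = a + a := by rw [h2, ← ha]
    rw [norm_smul, show ‖(2⁻¹:ℝ)‖ = 2⁻¹ by norm_num]
    linarith
  -- generic norm bound for the averaged sum
  have havg : ∀ C : ℝ, (∀ b ∈ range (2^n), ‖(2⁻¹ : ℝ) • ((V ^ b) ζ + U ((V ^ b) ζ))‖ ≤ C) →
      ‖((2 : ℝ) ^ n)⁻¹ • ∑ b ∈ range (2 ^ n),
        (2⁻¹ : ℝ) • ((V ^ b) ζ + U ((V ^ b) ζ))‖ ≤ C := by
    intro C hC
    rw [norm_smul]
    simp only [norm_inv, norm_pow, Real.norm_two]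
    calc ((2:ℝ)^n)⁻¹ * ‖∑ b ∈ range (2 ^ n), (2⁻¹ : ℝ) • ((V ^ b) ζ + U ((V ^ b) ζ))‖
        ≤ ((2:ℝ)^n)⁻¹ * ∑ b ∈ range (2 ^ n), ‖(2⁻¹ : ℝ) • ((V ^ b) ζ + U ((V ^ b) ζ))‖ := by
          gcongr; exact norm_sum_le _ _
    _ ≤ ((2:ℝ)^n)⁻¹ * ∑ b ∈ range (2 ^ n), C :=
          mul_le_mul_of_nonneg_left (Finset.sum_le_sum hC) (by positivity)
    _ = C := by
          rw [Finset.sum_const, card_range, nsmul_eq_mul]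
          push_cast
          field_simp
  by_cases hcase : a ≤ (2⁻¹ : ℝ) ^ (n - 2) * ‖ξ‖
  · -- easy case
    refine le_max_of_le_right ?_
    refine le_trans (havg _ ?_) hcase
    intro b _
    rw [hsummand b]; exact htriv b
  · -- main case
    push_neg at hcase
    refine le_max_of_le_left ?_
    have hapos : 0 < a := lt_of_le_of_lt (by positivity) hcase
    -- find m₀ with ‖ζ - W^m₀ ζ‖ ≥ a/4
    have hm0 : ∃ m₀ < 2^(k+1), a/4 ≤ ‖ζ - (W ^ m₀) ζ‖ := by
      by_contra hcon
      push_neg at hcon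
      -- telescoping sum
      have htel : ∑ m ∈ range (2^(k+1)), (W ^ m) ζ = (2⁻¹ : ℝ) • (ξ - (W ^ (2^(k+1))) ξ) := by
        have hterm : ∀ m : ℕ, (W ^ m) ζ
            = (2⁻¹ : ℝ) • ((W ^ m) ξ - (W ^ (m+1)) ξ) := by
          intro m
          rw [hζeq, map_smul, map_sub]
          have hWW : (W ^ m) (W ξ) = (W ^ (m+1)) ξ := by rw [pow_succ]; rfl
          rw [hWW]
        calc ∑ m ∈ range (2^(k+1)), (W ^ m) ζ
            = ∑ m ∈ range (2^(k+1)), (2⁻¹ : ℝ) • ((W ^ m) ξ - (W ^ (m+1)) ξ) := by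
              exact Finset.sum_congr rfl fun m _ => hterm m
        _ = (2⁻¹ : ℝ) • ∑ m ∈ range (2^(k+1)), ((W ^ m) ξ - (W ^ (m+1)) ξ) := by
              rw [Finset.smul_sum]
        _ = (2⁻¹ : ℝ) • (ξ - (W ^ (2^(k+1))) ξ) := by
              rw [Finset.sum_range_sub' (fun m => (W ^ m) ξ)]
              simp
      -- upper bound on the telescoping sum
      have hub : ‖∑ m ∈ range (2^(k+1)), (W ^ m) ζ‖ ≤ ‖ξ‖ := by
        rw [htel, norm_smul]
        simp only [norm_inv, Real.norm_two]
        have : ‖ξ - (W ^ (2^(k+1))) ξ‖ ≤ ‖ξ‖ + ‖ξ‖ := by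
          calc ‖ξ - (W ^ (2^(k+1))) ξ‖ ≤ ‖ξ‖ + ‖(W ^ (2^(k+1))) ξ‖ := norm_sub_le _ _
          _ = ‖ξ‖ + ‖ξ‖ := by rw [(W ^ (2^(k+1))).norm_map]
        linarith
      -- lower bound
      have hM : (0:ℕ) < 2^(k+1) := by positivity
      have hlb : (3/4 : ℝ) * (2^(k+1) : ℕ) * a < ‖∑ m ∈ range (2^(k+1)), (W ^ m) ζ‖ := by
        have hsum : ∑ m ∈ range (2^(k+1)), (W ^ m) ζ
            = (2^(k+1) : ℕ) • ζ - ∑ m ∈ range (2^(k+1)), (ζ - (W ^ m) ζ) := by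
          rw [Finset.sum_sub_distrib, Finset.sum_const, card_range]
          abel
        rw [hsum]
        have h1 : ‖∑ m ∈ range (2^(k+1)), (ζ - (W ^ m) ζ)‖ < (2^(k+1) : ℕ) * (a/4) := by
          calc ‖∑ m ∈ range (2^(k+1)), (ζ - (W ^ m) ζ)‖
              ≤ ∑ m ∈ range (2^(k+1)), ‖ζ - (W ^ m) ζ‖ := norm_sum_le _ _
          _ < ∑ m ∈ range (2^(k+1)), (a/4) := by
              apply Finset.sum_lt_sum_of_nonempty ⟨0, Finset.mem_range.mpr hM⟩
              intro m hm
              exact hcon m (Finset.mem_range.mp hm)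
          _ = (2^(k+1) : ℕ) * (a/4) := by rw [Finset.sum_const, card_range, nsmul_eq_mul]
        have h2 : ‖(2^(k+1) : ℕ) • ζ‖ = (2^(k+1) : ℕ) * a := by
          rw [← Nat.cast_smul_eq_nsmul ℝ, norm_smul]
          simp [ha]
        calc (3/4 : ℝ) * (2^(k+1) : ℕ) * a
            = (2^(k+1) : ℕ) * a - (2^(k+1) : ℕ) * (a/4) := by ring
        _ < ‖(2^(k+1) : ℕ) • ζ‖ - ‖∑ m ∈ range (2^(k+1)), (ζ - (W ^ m) ζ)‖ := by
              rw [h2]; linarith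
        _ ≤ ‖(2^(k+1) : ℕ) • ζ - ∑ m ∈ range (2^(k+1)), (ζ - (W ^ m) ζ)‖ :=
              norm_sub_norm_le _ _
      -- contradiction
      have hpow : ((2:ℝ)^(k+1) : ℝ) * ((2⁻¹:ℝ) ^ (n-2)) = 2 := by
        show ((2:ℝ)^(k+1)) * ((2⁻¹:ℝ) ^ k) = 2
        rw [inv_pow, pow_succ]
        field_simp
      have : (3/4 : ℝ) * (2^(k+1) : ℕ) * a < ‖ξ‖ := lt_of_lt_of_le hlb hub
      have hcast : ((2^(k+1) : ℕ) : ℝ) = (2:ℝ)^(k+1) := by push_cast; ring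
      rw [hcast] at this
      have h3 : (3/4 : ℝ) * ((2:ℝ)^(k+1)) * ((2⁻¹:ℝ)^(n-2) * ‖ξ‖)
          < (3/4 : ℝ) * ((2:ℝ)^(k+1)) * a := by
        have : (0:ℝ) < (3/4 : ℝ) * ((2:ℝ)^(k+1)) := by positivity
        exact mul_lt_mul_of_pos_left hcase this
      have h4 : (3/4 : ℝ) * ((2:ℝ)^(k+1)) * ((2⁻¹:ℝ)^(n-2) * ‖ξ‖) = (3/2) * ‖ξ‖ := by
        rw [show (3/4 : ℝ) * ((2:ℝ)^(k+1)) * ((2⁻¹:ℝ)^(n-2) * ‖ξ‖)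
            = (3/4) * (((2:ℝ)^(k+1)) * ((2⁻¹:ℝ)^(n-2))) * ‖ξ‖ by ring, hpow]
        ring
      have hξpos : 0 ≤ ‖ξ‖ := norm_nonneg _
      nlinarith
    obtain ⟨m₀, hm₀lt, hm₀⟩ := hm0
    -- the "bad" set B
    set B := (range (2^n)).filter (fun b => a/8 ≤ ‖ζ - (U * W ^ b) ζ‖) with hB
    -- pairing claim
    have hpair : ∀ b < 2^(k+1), (a/8 ≤ ‖ζ - (U * W ^ b) ζ‖)
        ∨ (a/8 ≤ ‖ζ - (U * W ^ (b + m₀)) ζ‖) := by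
      intro b hb
      by_contra hcon
      push_neg at hcon
      obtain ⟨h1, h2⟩ := hcon
      have hsplit : (U * W ^ (b + m₀)) ζ = (U * W ^ b) ((W ^ m₀) ζ) := by
        rw [pow_add]
        rfl
      have h3 : ‖(U * W ^ b) ζ - (U * W ^ (b + m₀)) ζ‖ = ‖ζ - (W ^ m₀) ζ‖ := by
        rw [hsplit, ← map_sub, (U * W ^ b).norm_map]
      have h4 : ‖(U * W ^ b) ζ - (U * W ^ (b + m₀)) ζ‖
          ≤ ‖ζ - (U * W ^ (b+m₀)) ζ‖ + ‖ζ - (U * W ^ b) ζ‖ := by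
        have := norm_sub_le_norm_sub_add_norm_sub ((U * W ^ b) ζ) ζ ((U * W ^ (b + m₀)) ζ)
        calc ‖(U * W ^ b) ζ - (U * W ^ (b + m₀)) ζ‖
            ≤ ‖(U * W ^ b) ζ - ζ‖ + ‖ζ - (U * W ^ (b + m₀)) ζ‖ := this
        _ = ‖ζ - (U * W ^ b) ζ‖ + ‖ζ - (U * W ^ (b + m₀)) ζ‖ := by rw [norm_sub_rev]
        _ = ‖ζ - (U * W ^ (b+m₀)) ζ‖ + ‖ζ - (U * W ^ b) ζ‖ := by ring
      rw [h3] at h4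
      linarith
    -- cardinality bound: 2^(k+1) ≤ 2 * B.card
    have hcard : 2^(k+1) ≤ 2 * B.card := by
      have := Finset.card_le_mul_card_image_of_maps_to
        (f := fun b => if a/8 ≤ ‖ζ - (U * W ^ b) ζ‖ then b else b + m₀)
        (s := range (2^(k+1))) (t := B) ?_ 2 ?_
      · simpa using this
      · intro b hb
        rw [Finset.mem_range] at hb
        by_cases h : a/8 ≤ ‖ζ - (U * W ^ b) ζ‖
        · simp only [h, if_pos]
          rw [hB, Finset.mem_filter, Finset.mem_range]
          constructor
          · calc b < 2^(k+1) := hb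
            _ ≤ 2^n := Nat.pow_le_pow_right (by norm_num) (by omega)
          · exact h
        · simp only [h, if_neg, if_false]
          rw [hB, Finset.mem_filter, Finset.mem_range]
          constructor
          · have : b + m₀ < 2^(k+1) + 2^(k+1) := by omega
            calc b + m₀ < 2^(k+1) + 2^(k+1) := this
            _ = 2^(k+2) := by ring
          · rcases hpair b hb with h' | h'
            · exact absurd h' h
            · exact h'
      · intro c _
        have hsub : (range (2^(k+1))).filter
            (fun b => (if a/8 ≤ ‖ζ - (U * W ^ b) ζ‖ then b else b + m₀) = c)
            ⊆ {c, c - m₀} := by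
          intro b hb
          rw [Finset.mem_filter] at hb
          rcases hb with ⟨_, hbc⟩
          by_cases h : a/8 ≤ ‖ζ - (U * W ^ b) ζ‖
          · rw [if_pos h] at hbc
            simp [hbc]
          · rw [if_neg h] at hbc
            have : b = c - m₀ := by omega
            simp [this]
        calc ((range (2^(k+1))).filter _).card ≤ ({c, c - m₀} : Finset ℕ).card :=
              Finset.card_le_card hsub
        _ ≤ 2 := Finset.card_insert_le _ _ |>.trans (by simp)
    -- uniform convexity bound for b ∈ B
    have hUCb : ∀ b ∈ B, ‖(2⁻¹ : ℝ) • (ζ + (U * W ^ b) ζ)‖ ≤ (1 - δ) * a := by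
      intro b hb
      rw [hB, Finset.mem_filter] at hb
      have hdist := hb.2
      set g := U * W ^ b with hg
      have hgnorm : ‖g ζ‖ = a := g.norm_map ζ
      have hx : ‖a⁻¹ • ζ‖ = 1 := by
        rw [norm_smul, Real.norm_eq_abs, abs_of_pos (inv_pos.mpr hapos), ← ha,
          inv_mul_cancel₀ (ne_of_gt hapos)]
      have hy : ‖a⁻¹ • (g ζ)‖ = 1 := by
        rw [norm_smul, Real.norm_eq_abs, abs_of_pos (inv_pos.mpr hapos), hgnorm,
          inv_mul_cancel₀ (ne_of_gt hapos)]
      have hxy : (1/8 : ℝ) ≤ ‖a⁻¹ • ζ - a⁻¹ • (g ζ)‖ := by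
        rw [← smul_sub, norm_smul, Real.norm_eq_abs, abs_of_pos (inv_pos.mpr hapos)]
        calc (1/8 : ℝ) = a⁻¹ * (a/8) := by field_simp
        _ ≤ a⁻¹ * ‖ζ - g ζ‖ := by
            apply mul_le_mul_of_nonneg_left _ (le_of_lt (inv_pos.mpr hapos))
            linarith [hb.2]
      have := hUC.2 (1/8) (by norm_num) (by norm_num) (a⁻¹ • ζ) (a⁻¹ • (g ζ)) hx hy hxy
      have heq : (2⁻¹ : ℝ) • (a⁻¹ • ζ + a⁻¹ • (g ζ)) = a⁻¹ • ((2⁻¹ : ℝ) • (ζ + g ζ)) := by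
        rw [← smul_add, smul_comm]
      rw [heq, norm_smul, Real.norm_eq_abs, abs_of_pos (inv_pos.mpr hapos)] at this
      rw [← hδdef] at this
      calc ‖(2⁻¹ : ℝ) • (ζ + g ζ)‖ = a * (a⁻¹ * ‖(2⁻¹ : ℝ) • (ζ + g ζ)‖) := by
            field_simp
      _ ≤ a * (1 - δ) := by
            apply mul_le_mul_of_nonneg_left this (le_of_lt hapos)
      _ = (1 - δ) * a := by ring
    -- final summation
    rw [norm_smul]
    simp only [norm_inv, norm_pow, Real.norm_two]
    have hsumbound : ∑ b ∈ range (2^n), ‖(2⁻¹ : ℝ) • ((V ^ b) ζ + U ((V ^ b) ζ))‖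
        ≤ (2^n : ℕ) * a - B.card * (δ * a) := by
      have hstep : ∀ b ∈ range (2^n), ‖(2⁻¹ : ℝ) • ((V ^ b) ζ + U ((V ^ b) ζ))‖
          ≤ a - (if b ∈ B then δ * a else 0) := by
        intro b hb
        rw [hsummand b]
        by_cases h : b ∈ B
        · rw [if_pos h]
          have := hUCb b h
          linarith
        · rw [if_neg h]
          simpa using htriv b
      calc ∑ b ∈ range (2^n), ‖(2⁻¹ : ℝ) • ((V ^ b) ζ + U ((V ^ b) ζ))‖
          ≤ ∑ b ∈ range (2^n), (a - (if b ∈ B then δ * a else 0)) :=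
            Finset.sum_le_sum hstep
      _ = (2^n : ℕ) * a - ∑ b ∈ range (2^n), (if b ∈ B then δ * a else 0) := by
            rw [Finset.sum_sub_distrib, Finset.sum_const, card_range, nsmul_eq_mul]
      _ = (2^n : ℕ) * a - B.card * (δ * a) := by
            congr 1
            rw [Finset.sum_ite_mem, Finset.inter_eq_right.mpr (Finset.filter_subset _ _),
              Finset.sum_const, nsmul_eq_mul]
    calc ((2:ℝ)^n)⁻¹ * ‖∑ b ∈ range (2 ^ n), (2⁻¹ : ℝ) • ((V ^ b) ζ + U ((V ^ b) ζ))‖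
        ≤ ((2:ℝ)^n)⁻¹ * ((2^n : ℕ) * a - B.card * (δ * a)) :=
          mul_le_mul_of_nonneg_left (le_trans (norm_sum_le _ _) hsumbound) (by positivity)
    _ ≤ (1 - δ/4) * a := by
          have hcard' : (2:ℝ)^(k+1) ≤ 2 * (B.card : ℝ) := by
            have h2 := (Nat.cast_le (α := ℝ)).mpr hcard
            push_cast at h2
            linarith
          have hcast : ((2^n : ℕ) : ℝ) = (2:ℝ)^n := by push_cast; ring
          rw [hcast]
          have hpow : (2:ℝ)^n = 4 * 2^k := by
            show (2:ℝ)^(k+2) = 4 * 2^k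
            ring
          have hδa : 0 ≤ δ * a := by positivity
          have hBge : (2:ℝ)^k ≤ (B.card : ℝ) := by
            have : (2:ℝ)^(k+1) = 2 * 2^k := by ring
            linarith [hcard']
          rw [inv_mul_le_iff₀ (by positivity : (0:ℝ) < (2:ℝ)^n)]
          rw [hpow]
          nlinarith [hapos.le, hδpos]
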